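/- Every finite simple connected graph G has a unique irreducible tree partition. Moreover, this irreducible tree partition P* satisfies P* ⪰ P for every tree partition P of G (it is the greatest element, hence the unique maximal element, of the refinement order on tree partitions of G). -/

import Mathlib

open Finset

variable {V : Type*} [Fintype V] [DecidableEq V]

/-- `P` is a partition of the vertex set `V` into nonempty, pairwise disjoint parts
covering all of `V`. -/
def IsVertexPartition (P : Set (Set V)) : Prop :=
  (∀ p ∈ P, p.Nonempty) ∧ (∀ v : V, ∃ p ∈ P, v ∈ p) ∧
    ∀ p ∈ P, ∀ q ∈ P, p ≠ q → Disjoint p q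

/-- The reduced simple graph on the parts of `P`: two distinct parts are adjacent iff
some edge of `G` joins them. -/
def reducedGraph (G : SimpleGraph V) (P : Set (Set V)) : SimpleGraph P where
  Adj a b := a ≠ b ∧ ∃ u ∈ (a : Set V), ∃ v ∈ (b : Set V), G.Adj u v
  symm := by
    constructor
    rintro a b ⟨hab, u, hu, v, hv, huv⟩
    exact ⟨hab.symm, v, hv, u, hu, huv.symm⟩
  loopless := by
    constructor
    rintro a ⟨h, -⟩
    exact h rfl

/-- Between any two distinct parts of `P` there is at most one edge of `G`, i.e. the
reduced multigraph `G_P` has no parallel edges. -/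
def NoParallelEdges (G : SimpleGraph V) (P : Set (Set V)) : Prop :=
  ∀ p ∈ P, ∀ q ∈ P, p ≠ q →
    ∀ u ∈ p, ∀ v ∈ q, ∀ u' ∈ p, ∀ v' ∈ q,
      G.Adj u v → G.Adj u' v' → u = u' ∧ v = v'

/-- `P` is a tree partition of `G`: it is a partition of the vertex set and the reduced
multigraph `G_P` is a tree, i.e. the reduced simple graph is a tree and there are no
parallel edges between parts. -/
def IsTreePartition (G : SimpleGraph V) (P : Set (Set V)) : Prop :=
  IsVertexPartition P ∧ (reducedGraph G P).IsTree ∧ NoParallelEdges G P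

/-- `P₁` is finer than `P₂` (written `P₁ ⪰ P₂`): every part of `P₁` is contained in
some part of `P₂`. -/
def Finer (P₁ P₂ : Set (Set V)) : Prop :=
  ∀ p ∈ P₁, ∃ q ∈ P₂, p ⊆ q

/-- `P` is an irreducible tree partition of `G`: a tree partition that is maximal with
respect to the refinement order, i.e. no strictly finer tree partition exists. -/
def IsIrreducibleTreePartition (G : SimpleGraph V) (P : Set (Set V)) : Prop :=
  IsTreePartition G P ∧
    ∀ Q : Set (Set V), IsTreePartition G Q → Finer Q P → Q = P

set_option linter.unusedSectionVars false

section Aux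

open SimpleGraph

/-- Generic projection of reachability along a map. -/
lemma reachable_map_aux {A B : Type*} {H : SimpleGraph A} {R : SimpleGraph B} {f : A → B}
    (hf : ∀ a b, H.Adj a b → R.Reachable (f a) (f b)) {x y : A} (h : H.Reachable x y) :
    R.Reachable (f x) (f y) := by
  obtain ⟨w⟩ := h
  induction w with
  | nil => exact Reachable.refl _
  | cons h _ ih => exact (hf _ _ h).trans ih

lemma reachable_eq_aux {A B : Type*} {H : SimpleGraph A} {f : A → B}
    (hf : ∀ a b, H.Adj a b → f a = f b) {x y : A} (h : H.Reachable x y) : f x = f y := by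
  obtain ⟨w⟩ := h
  induction w with
  | nil => rfl
  | cons h _ ih => exact (hf _ _ h).trans ih

variable (G : SimpleGraph V)

/-- The graph `G` with all bridges removed. -/
def bridgeFree : SimpleGraph V := G.deleteEdges {e | G.IsBridge e}

variable {G}

lemma bridgeFree_adj {u v : V} :
    (bridgeFree G).Adj u v ↔ G.Adj u v ∧ ¬ G.IsBridge s(u, v) := by
  simp [bridgeFree]

lemma bridgeFree_le_delete {e : Sym2 V} (he : G.IsBridge e) :
    bridgeFree G ≤ G \ SimpleGraph.fromEdgeSet {e} := by
  intro u v h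
  rw [bridgeFree_adj] at h
  rw [sdiff_adj, fromEdgeSet_adj]
  refine ⟨h.1, fun hc => ?_⟩
  rcases hc with ⟨hmem, -⟩
  rw [Set.mem_singleton_iff] at hmem
  exact h.2 (hmem ▸ he)

variable (G)

/-- The bridge component of a vertex. -/
def bcomp (v : V) : Set V := {u | (bridgeFree G).Reachable v u}

/-- The partition into bridge components. -/
def Pstar : Set (Set V) := {p | ∃ v, p = bcomp G v}

variable {G}

lemma mem_bcomp_self (v : V) : v ∈ bcomp G v := Reachable.refl v

lemma bcomp_eq_of_mem {u v : V} (h : u ∈ bcomp G v) : bcomp G u = bcomp G v := by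
  ext x
  exact ⟨fun hx => h.trans hx, fun hx => h.symm.trans hx⟩

lemma part_eq_bcomp {p : Set V} (hp : p ∈ Pstar G) {v : V} (hv : v ∈ p) :
    p = bcomp G v := by
  obtain ⟨w, rfl⟩ := hp
  exact (bcomp_eq_of_mem hv).symm

lemma reachable_of_mem_bcomp {v x y : V} (hx : x ∈ bcomp G v) (hy : y ∈ bcomp G v) :
    (bridgeFree G).Reachable x y := hx.symm.trans hy

lemma pstar_vertexPartition : IsVertexPartition (Pstar G) := by
  refine ⟨?_, ?_, ?_⟩
  · rintro p ⟨v, rfl⟩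
    exact ⟨v, mem_bcomp_self v⟩
  · intro v
    exact ⟨bcomp G v, ⟨v, rfl⟩, mem_bcomp_self v⟩
  · intro p hp q hq hne
    rw [Set.disjoint_left]
    intro x hxp hxq
    exact hne ((part_eq_bcomp hp hxp).trans (part_eq_bcomp hq hxq).symm)

/-- Non-bridge edges join vertices in the same bridge component. -/
lemma bcomp_eq_of_not_bridge {u v : V} (h : G.Adj u v) (hb : ¬ G.IsBridge s(u, v)) :
    bcomp G u = bcomp G v := by
  have hmem : v ∈ bcomp G u := (bridgeFree_adj.mpr ⟨h, hb⟩).reachable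
  exact (bcomp_eq_of_mem hmem).symm

/-- Edges between distinct parts of `Pstar` are bridges. -/
lemma bridge_of_cross {p q : Set V} (hp : p ∈ Pstar G) (hq : q ∈ Pstar G) (hne : p ≠ q)
    {u v : V} (hu : u ∈ p) (hv : v ∈ q) (h : G.Adj u v) : G.IsBridge s(u, v) := by
  by_contra hb
  exact hne (((part_eq_bcomp hp hu).trans (bcomp_eq_of_not_bridge h hb)).trans
    (part_eq_bcomp hq hv).symm)

lemma pstar_noParallel : NoParallelEdges G (Pstar G) := by
  intro p hp q hq hne u hu v hv u' hu' v' hv' h h'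
  have hb : G.IsBridge s(u, v) := bridge_of_cross hp hq hne hu hv h
  have hdisj : Disjoint p q := pstar_vertexPartition.2.2 p hp q hq hne
  have key : s(u, v) = s(u', v') := by
    by_contra hee
    have hreach : (G \ SimpleGraph.fromEdgeSet {s(u, v)}).Reachable u v := by
      have h1 : (bridgeFree G).Reachable u u' :=
        reachable_of_mem_bcomp ((part_eq_bcomp hp hu) ▸ hu) ((part_eq_bcomp hp hu) ▸ hu')
      have h2 : (bridgeFree G).Reachable v' v :=
        reachable_of_mem_bcomp ((part_eq_bcomp hq hv) ▸ hv') ((part_eq_bcomp hq hv) ▸ hv)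
      have hmid : (G \ SimpleGraph.fromEdgeSet {s(u, v)}).Adj u' v' := by
        rw [sdiff_adj, fromEdgeSet_adj]
        exact ⟨h', fun hc => hee (Set.mem_singleton_iff.mp hc.1).symm⟩
      exact ((h1.mono (bridgeFree_le_delete hb)).trans hmid.reachable).trans
        (h2.mono (bridgeFree_le_delete hb))
    exact (SimpleGraph.isBridge_iff.mp hb) hreach
  rw [Sym2.eq_iff] at key
  rcases key with ⟨rfl, rfl⟩ | ⟨rfl, rfl⟩
  · exact ⟨rfl, rfl⟩
  · exact (Set.disjoint_left.mp hdisj hu' hv).elim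


variable (G)

noncomputable def rep (P : ↥(Pstar G)) : V := P.2.choose

lemma part_eq_bcomp_rep (P : ↥(Pstar G)) : (P : Set V) = bcomp G (rep G P) :=
  P.2.choose_spec

lemma rep_mem (P : ↥(Pstar G)) : rep G P ∈ (P : Set V) := by
  rw [part_eq_bcomp_rep]; exact mem_bcomp_self _

def cls (v : V) : ↥(Pstar G) := ⟨bcomp G v, ⟨v, rfl⟩⟩

lemma mem_cls (v : V) : v ∈ (cls G v : Set V) := mem_bcomp_self v

variable {G}

lemma cls_eq_of_mem {p : ↥(Pstar G)} {v : V} (hv : v ∈ (p : Set V)) : cls G v = p :=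
  Subtype.ext (part_eq_bcomp p.2 hv).symm

lemma part_eq_of_mem {P Q : ↥(Pstar G)} {v : V} (h1 : v ∈ (P : Set V))
    (h2 : v ∈ (Q : Set V)) : P = Q :=
  Subtype.ext ((part_eq_bcomp P.2 h1).trans (part_eq_bcomp Q.2 h2).symm)

lemma same_part_reach {P : ↥(Pstar G)} {x y : V} (hx : x ∈ (P : Set V))
    (hy : y ∈ (P : Set V)) : (bridgeFree G).Reachable x y := by
  have h := part_eq_bcomp P.2 hx
  exact reachable_of_mem_bcomp (h ▸ hx) (h ▸ hy)

lemma cls_reachable {a b : V} (h : G.Adj a b) :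
    (reducedGraph G (Pstar G)).Reachable (cls G a) (cls G b) := by
  by_cases hc : cls G a = cls G b
  · rw [hc]
  · exact (show (reducedGraph G (Pstar G)).Adj (cls G a) (cls G b) from
      ⟨hc, a, mem_cls G a, b, mem_cls G b, h⟩).reachable

lemma reduced_pstar_connected (hG : G.Connected) : (reducedGraph G (Pstar G)).Connected := by
  have hne : Nonempty V := hG.nonempty
  rw [SimpleGraph.connected_iff]
  refine ⟨fun P Q => ?_, ⟨cls G (Classical.arbitrary V)⟩⟩
  have h := hG.preconnected (rep G P) (rep G Q)
  have := reachable_map_aux (f := cls G) (fun a b hab => cls_reachable hab) h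
  rwa [cls_eq_of_mem (rep_mem G P), cls_eq_of_mem (rep_mem G Q)] at this

lemma reduced_pstar_acyclic : (reducedGraph G (Pstar G)).IsAcyclic := by
  rw [SimpleGraph.isAcyclic_iff_forall_adj_isBridge]
  intro A B hAB
  obtain ⟨hneAB, u, hu, v, hv, huv⟩ := hAB
  have hb : G.IsBridge s(u, v) :=
    bridge_of_cross A.2 B.2 (fun h => hneAB (Subtype.ext h)) hu hv huv
  rw [SimpleGraph.isBridge_iff]
  refine fun hreach => ?_
  have key : ∀ C D : ↥(Pstar G),
      ((reducedGraph G (Pstar G)) \ SimpleGraph.fromEdgeSet {s(A, B)}).Adj C D →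
      (G \ SimpleGraph.fromEdgeSet {s(u, v)}).Reachable (rep G C) (rep G D) := by
    intro C D hCD
    rw [sdiff_adj] at hCD
    obtain ⟨⟨hCD', u', hu', v', hv', huv'⟩, hno⟩ := hCD
    have hsCD : s(C, D) ≠ s(A, B) := by
      intro h
      exact hno (by rw [SimpleGraph.fromEdgeSet_adj]; exact ⟨by simp [h], hCD'⟩)
    have hee : s(u', v') ≠ s(u, v) := by
      intro he
      rw [Sym2.eq_iff] at he
      rcases he with ⟨rfl, rfl⟩ | ⟨rfl, rfl⟩
      · exact hsCD (by rw [part_eq_of_mem hu' hu, part_eq_of_mem hv' hv])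
      · rw [part_eq_of_mem hu' hv, part_eq_of_mem hv' hu] at hsCD
        exact hsCD (Sym2.eq_swap)
    have hmid : (G \ SimpleGraph.fromEdgeSet {s(u, v)}).Adj u' v' := by
      rw [sdiff_adj, SimpleGraph.fromEdgeSet_adj]
      exact ⟨huv', fun hc => hee (Set.mem_singleton_iff.mp hc.1)⟩
    have h1 := (same_part_reach (rep_mem G C) hu').mono (bridgeFree_le_delete hb)
    have h2 := (same_part_reach hv' (rep_mem G D)).mono (bridgeFree_le_delete hb)
    exact (h1.trans hmid.reachable).trans h2
  have hmain := reachable_map_aux (f := rep G) key hreach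
  have h1 := (same_part_reach hu (rep_mem G A)).mono (bridgeFree_le_delete hb)
  have h2 := (same_part_reach (rep_mem G B) hv).mono (bridgeFree_le_delete hb)
  exact (SimpleGraph.isBridge_iff.mp hb) ((h1.trans hmain).trans h2)

lemma cross_bridge_of_treePartition {Q : Set (Set V)} (hQ : IsTreePartition G Q)
    {p q : Set V} (hp : p ∈ Q) (hq : q ∈ Q) (hne : p ≠ q) {u v : V}
    (hu : u ∈ p) (hv : v ∈ q) (h : G.Adj u v) : G.IsBridge s(u, v) := by
  obtain ⟨hpart, htree, hnp⟩ := hQ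
  choose f hf hfm using hpart.2.1
  have hcl : ∀ {x : V} {r : Set V}, r ∈ Q → x ∈ r → f x = r := by
    intro x r hr hx
    by_contra hc
    exact Set.disjoint_left.mp (hpart.2.2 _ (hf x) _ hr hc) (hfm x) hx
  rw [SimpleGraph.isBridge_iff]
  refine fun hreach => ?_
  have hAB : (⟨p, hp⟩ : ↥Q) ≠ ⟨q, hq⟩ := fun hc => hne (congrArg Subtype.val hc)
  have hAdj : (reducedGraph G Q).Adj ⟨p, hp⟩ ⟨q, hq⟩ := ⟨hAB, u, hu, v, hv, h⟩
  have hbr := (SimpleGraph.isAcyclic_iff_forall_adj_isBridge.mp htree.2) hAdj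
  rw [SimpleGraph.isBridge_iff] at hbr
  apply hbr
  have key : ∀ a b : V, (G \ SimpleGraph.fromEdgeSet {s(u, v)}).Adj a b →
      (reducedGraph G Q \ SimpleGraph.fromEdgeSet {s((⟨p, hp⟩ : ↥Q), (⟨q, hq⟩ : ↥Q))}).Reachable
        ⟨f a, hf a⟩ ⟨f b, hf b⟩ := by
    intro a b hab
    rw [sdiff_adj, SimpleGraph.fromEdgeSet_adj] at hab
    obtain ⟨hab, hno⟩ := hab
    have habe : s(a, b) ≠ s(u, v) := fun hc => hno ⟨Set.mem_singleton_iff.mpr hc, hab.ne⟩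
    by_cases hfab : (⟨f a, hf a⟩ : ↥Q) = ⟨f b, hf b⟩
    · rw [hfab]
    · refine SimpleGraph.Adj.reachable ?_
      rw [sdiff_adj, SimpleGraph.fromEdgeSet_adj]
      refine ⟨⟨hfab, a, hfm a, b, hfm b, hab⟩, fun hc => ?_⟩
      have hc1 := Set.mem_singleton_iff.mp hc.1
      rw [Sym2.eq_iff] at hc1
      rcases hc1 with ⟨h1, h2⟩ | ⟨h1, h2⟩
      · have ha : a ∈ p := (show f a = p from congrArg Subtype.val h1) ▸ hfm a
        have hb' : b ∈ q := (show f b = q from congrArg Subtype.val h2) ▸ hfm b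
        obtain ⟨e1, e2⟩ := hnp p hp q hq hne u hu v hv a ha b hb' h hab
        exact habe (by rw [← e1, ← e2])
      · have ha : a ∈ q := (show f a = q from congrArg Subtype.val h1) ▸ hfm a
        have hb' : b ∈ p := (show f b = p from congrArg Subtype.val h2) ▸ hfm b
        obtain ⟨e1, e2⟩ := hnp p hp q hq hne u hu v hv b hb' a ha h hab.symm
        exact habe (by rw [← e1, ← e2, Sym2.eq_swap])
  have hmain := reachable_map_aux (f := fun x => (⟨f x, hf x⟩ : ↥Q)) key hreach
  have e1 : (⟨f u, hf u⟩ : ↥Q) = ⟨p, hp⟩ := Subtype.ext (hcl hp hu)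
  have e2 : (⟨f v, hf v⟩ : ↥Q) = ⟨q, hq⟩ := Subtype.ext (hcl hq hv)
  beta_reduce at hmain
  rwa [e1, e2] at hmain

lemma finer_pstar {Q : Set (Set V)} (hQ : IsTreePartition G Q) : Finer (Pstar G) Q := by
  rintro p ⟨v, rfl⟩
  choose f hf hfm using hQ.1.2.1
  refine ⟨f v, hf v, fun u hu => ?_⟩
  have hstep : ∀ a b : V, (bridgeFree G).Adj a b → f a = f b := by
    intro a b hab
    rw [bridgeFree_adj] at hab
    by_contra hc
    exact hab.2 (cross_bridge_of_treePartition hQ (hf a) (hf b) hc (hfm a) (hfm b) hab.1)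
  have hr : (bridgeFree G).Reachable v u := hu
  have := reachable_eq_aux hstep hr
  rw [this]; exact hfm u

lemma finer_antisymm {P Q : Set (Set V)} (hP : IsVertexPartition P) (hQ : IsVertexPartition Q)
    (h1 : Finer P Q) (h2 : Finer Q P) : P = Q := by
  have key : ∀ P Q : Set (Set V), IsVertexPartition P → Finer P Q → Finer Q P →
      ∀ p ∈ P, p ∈ Q := by
    intro P Q hP h1 h2 p hp
    obtain ⟨q, hq, hpq⟩ := h1 p hp
    obtain ⟨p', hp', hqp'⟩ := h2 q hq
    have hpp' : p = p' := by
      by_contra hc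
      obtain ⟨x, hx⟩ := hP.1 p hp
      exact Set.disjoint_left.mp (hP.2.2 p hp p' hp' hc) hx (hqp' (hpq hx))
    have : p = q := Set.Subset.antisymm hpq (hpp' ▸ hqp')
    exact this ▸ hq
  ext p
  exact ⟨key P Q hP h1 h2 p, key Q P hQ h2 h1 p⟩

end Aux

/-- Every finite simple connected graph has a unique irreducible tree
partition; moreover the irreducible tree partition is finer than every tree partition
(it is the greatest element of the refinement order). -/
theorem existsUnique_irreducible_tree_partition (G : SimpleGraph V) (hG : G.Connected) :
    (∃! P : Set (Set V), IsIrreducibleTreePartition G P) ∧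
      ∀ P : Set (Set V), IsIrreducibleTreePartition G P →
        ∀ Q : Set (Set V), IsTreePartition G Q → Finer P Q := by
  have hT : IsTreePartition G (Pstar G) :=
    ⟨pstar_vertexPartition, ⟨reduced_pstar_connected hG, reduced_pstar_acyclic⟩,
      pstar_noParallel⟩
  have hirr : IsIrreducibleTreePartition G (Pstar G) :=
    ⟨hT, fun Q hQ hfin => finer_antisymm hQ.1 pstar_vertexPartition hfin (finer_pstar hQ)⟩
  have huniq : ∀ P : Set (Set V), IsIrreducibleTreePartition G P → P = Pstar G :=
    fun P hP => (hP.2 (Pstar G) hT (finer_pstar hP.1)).symm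
  refine ⟨⟨Pstar G, hirr, huniq⟩, fun P hP Q hQ => ?_⟩
  rw [huniq P hP]
  exact finer_pstar hQ
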